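/- Suppose b_k(t)/b_{k+1}(t) ≤ b_k(u)/b_{k+1}(u) for 0 ≤ k ≤ N−1, all b_j(t), b_j(u) > 0, and let Q_0,…,Q_N be the points produced by the geometric algorithm at parameter t (Q_k := (Σ_{j≤k} ω_j W_j b_j(t))/(Σ_{j≤k} ω_j b_j(t))). Then S_N(u) := (Σ_k ω_k W_k b_k(u))/(Σ_k ω_k b_k(u)) lies in the convex hull of {Q_0, …, Q_N}. -/

import Mathlib

open Finset

private lemma abel_aux {M : Type*} [AddCommGroup M] [Module ℝ M] (c : ℕ → ℝ) (a : ℕ → M)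
    (n : ℕ) :
    ∑ k ∈ range (n + 1), c k • a k =
      (∑ k ∈ range n, (c k - c (k + 1)) • ∑ j ∈ range (k + 1), a j) +
        c n • ∑ j ∈ range (n + 1), a j := by
  induction n with
  | zero => simp
  | succ n ih =>
    have hA : ∑ j ∈ range (n + 1 + 1), a j = (∑ j ∈ range (n + 1), a j) + a (n + 1) :=
      sum_range_succ _ _
    rw [sum_range_succ (f := fun k => c k • a k), ih, sum_range_succ
      (f := fun k => (c k - c (k + 1)) • ∑ j ∈ range (k + 1), a j), hA]
    simp only [sub_smul, smul_add]
    abel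

theorem stmt7 (N d : ℕ) {α : Type*} (ω : ℕ → ℝ) (b : ℕ → α → ℝ) (t u : α)
    (W : ℕ → Fin d → ℝ)
    (hω : ∀ j ≤ N, 0 < ω j)
    (hbt : ∀ j ≤ N, 0 < b j t) (hbu : ∀ j ≤ N, 0 < b j u)
    (hratio : ∀ k < N, b k t / b (k + 1) t ≤ b k u / b (k + 1) u)
    (Q : ℕ → Fin d → ℝ)
    (hQ : ∀ k ≤ N, Q k = (∑ j ∈ range (k + 1), ω j * b j t)⁻¹ •
        ∑ j ∈ range (k + 1), (ω j * b j t) • W j) :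
    (∑ k ∈ range (N + 1), ω k * b k u)⁻¹ •
        ∑ k ∈ range (N + 1), (ω k * b k u) • W k ∈
      convexHull ℝ (Q '' Set.Iic N) := by
  classical
  let c : ℕ → ℝ := fun k => b k u / b k t
  let s : ℕ → ℝ := fun k => ∑ j ∈ range (k + 1), ω j * b j t
  let A : ℕ → Fin d → ℝ := fun k => ∑ j ∈ range (k + 1), (ω j * b j t) • W j
  have hs : ∀ k ≤ N, 0 < s k := by
    intro k hk
    apply Finset.sum_pos
    · intro j hj
      have hjN : j ≤ N := le_trans (Nat.lt_succ_iff.mp (mem_range.mp hj)) hk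
      exact mul_pos (hω j hjN) (hbt j hjN)
    · exact ⟨0, mem_range.mpr (Nat.succ_pos k)⟩
  let coef : ℕ → ℝ := fun k => if k < N then c k - c (k + 1) else c N
  have hcmono : ∀ k < N, c (k + 1) ≤ c k := by
    intro k hk
    have h1 : 0 < b (k + 1) t := hbt _ hk
    have h2 : 0 < b (k + 1) u := hbu _ hk
    have h := hratio k hk
    rw [div_le_div_iff₀ h1 h2] at h
    show b (k + 1) u / b (k + 1) t ≤ b k u / b k t
    rw [div_le_div_iff₀ h1 (hbt _ (le_of_lt hk))]
    nlinarith
  have hcpos : ∀ k ≤ N, 0 < c k := fun k hk => div_pos (hbu k hk) (hbt k hk)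
  have hcoef_nonneg : ∀ k ≤ N, 0 ≤ coef k := by
    intro k hk
    by_cases h : k < N
    · simp only [coef, if_pos h]
      exact sub_nonneg.mpr (hcmono k h)
    · have hkN : k = N := le_antisymm hk (not_lt.mp h)
      subst hkN
      simp only [coef, if_neg h]
      exact le_of_lt (hcpos k le_rfl)
  let μ : ℕ → ℝ := fun k => coef k * s k
  have hμ_nonneg : ∀ k ≤ N, 0 ≤ μ k := fun k hk =>
    mul_nonneg (hcoef_nonneg k hk) (le_of_lt (hs k hk))
  have hcb : ∀ k ≤ N, c k * (ω k * b k t) = ω k * b k u := by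
    intro k hk
    have : b k t ≠ 0 := (hbt k hk).ne'
    simp only [c]
    rw [div_mul_eq_mul_div, div_eq_iff this]
    ring
  -- sum of μ equals sum of ω b u
  have hsum_scalar : ∑ k ∈ range (N + 1), μ k = ∑ k ∈ range (N + 1), ω k * b k u := by
    have h := abel_aux c (fun j => ω j * b j t) N
    calc ∑ k ∈ range (N + 1), μ k
        = (∑ k ∈ range N, (c k - c (k + 1)) • s k) + c N • s N := by
          rw [sum_range_succ (f := μ)]
          congr 1
          · refine Finset.sum_congr rfl fun k hk => ?_
            simp only [μ, coef, if_pos (mem_range.mp hk), smul_eq_mul]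
          · simp only [μ, coef, if_neg (lt_irrefl N), smul_eq_mul]
      _ = ∑ k ∈ range (N + 1), c k • (ω k * b k t) := h.symm
      _ = ∑ k ∈ range (N + 1), ω k * b k u :=
          Finset.sum_congr rfl fun k hk => hcb k (Nat.lt_succ_iff.mp (mem_range.mp hk))
  -- vector sum
  have hsQ : ∀ k ≤ N, μ k • Q k = coef k • A k := by
    intro k hk
    rw [hQ k hk]
    have hne : s k ≠ 0 := (hs k hk).ne'
    show (coef k * s k) • ((s k)⁻¹ • A k) = coef k • A k
    rw [smul_smul, mul_assoc, mul_inv_cancel₀ hne, mul_one]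
  have hsum_vec : ∑ k ∈ range (N + 1), μ k • Q k =
      ∑ k ∈ range (N + 1), (ω k * b k u) • W k := by
    have h := abel_aux c (fun j => (ω j * b j t) • W j) N
    calc ∑ k ∈ range (N + 1), μ k • Q k
        = ∑ k ∈ range (N + 1), coef k • A k :=
          Finset.sum_congr rfl fun k hk => hsQ k (Nat.lt_succ_iff.mp (mem_range.mp hk))
      _ = (∑ k ∈ range N, (c k - c (k + 1)) • A k) + c N • A N := by
          rw [sum_range_succ (f := fun k => coef k • A k)]
          congr 1
          · refine Finset.sum_congr rfl fun k hk => ?_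
            simp only [coef, if_pos (mem_range.mp hk)]
          · simp only [coef, if_neg (lt_irrefl N)]
      _ = ∑ k ∈ range (N + 1), c k • ((ω k * b k t) • W k) := h.symm
      _ = ∑ k ∈ range (N + 1), (ω k * b k u) • W k := by
          refine Finset.sum_congr rfl fun k hk => ?_
          rw [smul_smul, hcb k (Nat.lt_succ_iff.mp (mem_range.mp hk))]
  have hpos : 0 < ∑ k ∈ range (N + 1), μ k := by
    rw [hsum_scalar]
    apply Finset.sum_pos
    · intro j hj
      have hjN : j ≤ N := Nat.lt_succ_iff.mp (mem_range.mp hj)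
      exact mul_pos (hω j hjN) (hbu j hjN)
    · exact ⟨0, mem_range.mpr (Nat.succ_pos N)⟩
  have hmem := Finset.centerMass_mem_convexHull (t := range (N + 1)) (w := μ) (z := Q)
    (fun k hk => hμ_nonneg k (Nat.lt_succ_iff.mp (mem_range.mp hk))) hpos
    (fun k hk => Set.mem_image_of_mem Q (Nat.lt_succ_iff.mp (mem_range.mp hk)))
  rw [Finset.centerMass, hsum_scalar, hsum_vec] at hmem
  exact hmem
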